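/- Let d ≥ 3 with γ < (d-2)/(2d), w_m > -1, 0 < 1 - 2γ(d-1)(1+w_m)/(d-2), and 0 ≤ x_Λ ≤ √(1-2γd/(d-2)). Then the point (0, √(1 - 2γd/(d-2) - x_Λ²), x_Λ) is a fixed point of the Λ > 0 extended KGR autonomous system (with λ_V = 0), and one of its Jacobian eigenvalues is exactly 0, namely μ3 = 0; the other two eigenvalues are μ1 = -2 and μ2 = -2(1+w_m)(1-2γd/(d-2))/(1-2γ(d-1)(1+w_m)/(d-2)) < 0. Hence this fixed point is non-hyperbolic. -/

import Mathlib

theorem stmt_18 (d : ℕ) (hd : 3 ≤ d) (γ wm : ℝ)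
    (hγ : γ < ((d:ℝ)-2)/(2*(d:ℝ))) (hw : -1 < wm)
    (B : ℝ) (hB : B = 1 - 2*γ*((d:ℝ)-1)*(1+wm)/((d:ℝ)-2)) (hB0 : 0 < B)
    (xΛ : ℝ) (hxΛ0 : 0 ≤ xΛ)
    (hxΛ1 : xΛ ≤ Real.sqrt (1 - 2*γ*(d:ℝ)/((d:ℝ)-2)))
    (G : ℝ × ℝ × ℝ → ℝ × ℝ × ℝ)
    (hG : ∀ p : ℝ × ℝ × ℝ, G p =
      ( ((1 - 2*γ*(d:ℝ)/((d:ℝ)-2))*(1+wm)/B - 2)*p.1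
          + ((1-wm)/B)*p.1^3 - ((1+wm)/B)*p.1*(p.2.1^2 + p.2.2^2) ,
        ((1 - 2*γ*(d:ℝ)/((d:ℝ)-2))*(1+wm)/B)*p.2.1
          + ((1-wm)/B)*p.2.1*p.1^2 - ((1+wm)/B)*p.2.1*(p.2.1^2 + p.2.2^2) ,
        ((1 - 2*γ*(d:ℝ)/((d:ℝ)-2))*(1+wm)/B)*p.2.2
          + ((1-wm)/B)*p.2.2*p.1^2
          - ((1+wm)/B)*p.2.2*(p.2.1^2 + p.2.2^2) ))
    (p : ℝ × ℝ × ℝ)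
    (hp : p = (0, Real.sqrt (1 - 2*γ*(d:ℝ)/((d:ℝ)-2) - xΛ^2), xΛ))
    (μ1 μ2 : ℝ) (hμ1 : μ1 = -2)
    (hμ2 : μ2 = -(2*(1+wm)*(1 - 2*γ*(d:ℝ)/((d:ℝ)-2)))/B) :
    G p = 0
    ∧ (∃ v : ℝ × ℝ × ℝ, v ≠ 0 ∧ fderiv ℝ G p v = 0)
    ∧ (∃ v : ℝ × ℝ × ℝ, v ≠ 0 ∧ fderiv ℝ G p v = μ1 • v)
    ∧ (∃ v : ℝ × ℝ × ℝ, v ≠ 0 ∧ fderiv ℝ G p v = μ2 • v)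
    ∧ μ2 < 0 := by
  have hd2 : (2:ℝ) < (d:ℝ) := by exact_mod_cast (by omega : 2 < d)
  set A := 1 - 2*γ*(d:ℝ)/((d:ℝ)-2) with hAdef
  have hdpos : (0:ℝ) < (d:ℝ) - 2 := by linarith
  have hA : 0 < A := by
    rw [hAdef]
    have h1 : 2*γ*(d:ℝ) < (d:ℝ) - 2 := by
      rw [lt_div_iff₀ (by linarith : (0:ℝ) < 2*(d:ℝ))] at hγ
      nlinarith
    have h2 : 2*γ*(d:ℝ)/((d:ℝ)-2) < 1 := (div_lt_one hdpos).mpr h1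
    linarith
  set s := Real.sqrt (A - xΛ^2) with hsdef
  have hx2 : xΛ^2 ≤ A := by
    have h1 : xΛ^2 ≤ (Real.sqrt A)^2 := by nlinarith [Real.sqrt_nonneg A]
    rwa [Real.sq_sqrt hA.le] at h1
  have hs2 : s^2 = A - xΛ^2 := Real.sq_sqrt (by linarith)
  have hwm : 0 < 1 + wm := by linarith
  clear_value s A
  subst hp hμ1 hμ2
  -- rewrite G
  have hG' : G = fun q : ℝ × ℝ × ℝ =>
      (A*(1+wm)/B + ((1-wm)/B)*(q.1*q.1)
        - ((1+wm)/B)*(q.2.1*q.2.1 + q.2.2*q.2.2)) • q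
      - (2*q.1) • ((1:ℝ),(0:ℝ),(0:ℝ)) := by
    funext q
    rw [hG q]
    refine Prod.ext ?_ (Prod.ext ?_ ?_) <;>
      simp [smul_eq_mul] <;> ring
  set P : ℝ × ℝ × ℝ := (0, s, xΛ) with hP
  have hfx : HasFDerivAt (fun q : ℝ × ℝ × ℝ => q.1)
      (ContinuousLinearMap.fst ℝ ℝ (ℝ × ℝ)) P := hasFDerivAt_fst
  have hfy : HasFDerivAt (fun q : ℝ × ℝ × ℝ => q.2.1)
      ((ContinuousLinearMap.fst ℝ ℝ ℝ).comp (ContinuousLinearMap.snd ℝ ℝ (ℝ × ℝ))) P :=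
    hasFDerivAt_fst.comp P hasFDerivAt_snd
  have hfz : HasFDerivAt (fun q : ℝ × ℝ × ℝ => q.2.2)
      ((ContinuousLinearMap.snd ℝ ℝ ℝ).comp (ContinuousLinearMap.snd ℝ ℝ (ℝ × ℝ))) P :=
    hasFDerivAt_snd.comp P hasFDerivAt_snd
  have hh := (((hfx.mul hfx).const_mul ((1-wm)/B)).const_add (A*(1+wm)/B)).sub
      (((hfy.mul hfy).add (hfz.mul hfz)).const_mul ((1+wm)/B))
  have h1 := hh.smul (hasFDerivAt_id P)
  have h2 := (hfx.const_mul 2).smul (hasFDerivAt_const ((1:ℝ),(0:ℝ),(0:ℝ)) P)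
  have hP1 : P.1 = 0 := rfl
  have hP21 : P.2.1 = s := rfl
  have hP22 : P.2.2 = xΛ := rfl
  have hsum : s*s + xΛ*xΛ = A := by nlinarith [hs2]
  obtain ⟨L, hGd, hL⟩ : ∃ L : (ℝ × ℝ × ℝ) →L[ℝ] (ℝ × ℝ × ℝ), HasFDerivAt G L P ∧
      ∀ v : ℝ × ℝ × ℝ, L v =
        (-(2*v.1),
         -((1+wm)/B)*(2*(s*v.2.1) + 2*(xΛ*v.2.2))*s,
         -((1+wm)/B)*(2*(s*v.2.1) + 2*(xΛ*v.2.2))*xΛ) := by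
    refine ⟨_, by rw [hG']; exact h1.sub h2, ?_⟩
    intro v
    have hsimp : ∀ u : ℝ × ℝ × ℝ, True := fun _ => trivial
    refine Prod.ext ?_ (Prod.ext ?_ ?_) <;>
      simp only [ContinuousLinearMap.sub_apply, ContinuousLinearMap.add_apply,
        ContinuousLinearMap.smul_apply, ContinuousLinearMap.smulRight_apply,
        ContinuousLinearMap.coe_comp', Function.comp_apply,
        ContinuousLinearMap.coe_fst', ContinuousLinearMap.coe_snd',
        ContinuousLinearMap.id_apply, hP1, hP21, hP22,
        Prod.fst_sub, Prod.snd_sub, Prod.smul_fst, Prod.smul_snd,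
        Prod.fst_add, Prod.snd_add, Prod.mk_sub_mk, Prod.smul_mk,
        smul_eq_mul, Prod.mk_add_mk, id_eq, Pi.sub_apply, Pi.mul_apply, Pi.add_apply]
    · linear_combination (-(v.1 * ((1+wm)/B))) * hsum
    · linear_combination (-(v.2.1 * ((1+wm)/B))) * hsum
    · linear_combination (-(v.2.2 * ((1+wm)/B))) * hsum
  have hfd := hGd.fderiv
  refine ⟨?_, ?_, ?_, ?_, ?_⟩
  · -- G P = 0
    rw [hG P]
    simp only [hP1, hP21, hP22]
    refine Prod.ext ?_ (Prod.ext ?_ ?_) <;>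
      simp only [Prod.fst_zero, Prod.snd_zero]
    · ring
    · linear_combination (-(s * ((1+wm)/B))) * hsum
    · linear_combination (-(xΛ * ((1+wm)/B))) * hsum
  · -- zero eigenvector
    refine ⟨(0, xΛ, -s), ?_, ?_⟩
    · have hor : xΛ ≠ 0 ∨ s ≠ 0 := by
        by_contra hc
        push_neg at hc
        rw [hc.1, hc.2] at hs2
        simp at hs2
        nlinarith
      simp only [ne_eq, Prod.ext_iff, Prod.fst_zero, Prod.snd_zero]
      push_neg
      intro _
      rcases hor with h | h
      · intro hx; exact absurd hx h
      · intro _; simpa using h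
    · rw [hfd, hL]
      refine Prod.ext ?_ (Prod.ext ?_ ?_) <;>
        simp only [Prod.fst_zero, Prod.snd_zero] <;> ring
  · refine ⟨(1, 0, 0), by simp [Prod.ext_iff], ?_⟩
    rw [hfd, hL]
    refine Prod.ext ?_ (Prod.ext ?_ ?_) <;>
      simp only [Prod.smul_mk, smul_eq_mul] <;> ring
  · refine ⟨(0, s, xΛ), ?_, ?_⟩
    · have hor : xΛ ≠ 0 ∨ s ≠ 0 := by
        by_contra hc
        push_neg at hc
        rw [hc.1, hc.2] at hs2
        simp at hs2
        nlinarith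
      simp only [ne_eq, Prod.ext_iff, Prod.fst_zero, Prod.snd_zero]
      push_neg
      intro _ hs0
      rcases hor with h | h
      · exact h
      · exact absurd hs0 h
    · rw [hfd, hL]
      refine Prod.ext ?_ (Prod.ext ?_ ?_) <;>
        simp only [Prod.smul_mk, smul_eq_mul]
      · ring
      · linear_combination (-(2*s*((1+wm)/B))) * hsum
      · linear_combination (-(2*xΛ*((1+wm)/B))) * hsum
  · have h0 : 0 < 2*(1+wm)*A := by positivity
    rw [neg_div]
    exact neg_lt_zero.mpr (div_pos h0 hB0)
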